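/- Let L/K be a quadratic extension of fields with nontrivial automorphism τ, let r ≥ 3, and consider elements of GL_{2r}(L). Suppose there exist d₁₁, d₂₁, d₃₁, d₁₂, d₂₂, d₃₂ ∈ O_L^× (units), u ∈ L^× with u·τ(u) = 1, and a uniformizer π of L (an element with τ(π) ≠ π generating the maximal ideal) satisfying: (i) τ(d₂₁)^{−1} = u·d₁₁, (ii) d₂₂·d₃₂ = u·π^{−1}·τ(π), (iii) d₃₁ = d₁₂ and d₁₁·d₂₁·d₃₁^{−1} = d₁₂^{−1}·d₂₂·d₃₂. Then τ(d₁₁·π) = d₁₁·π, i.e. d₁₁·π is a τ-fixed uniformizer. Consequently, if L/K is ramified quadratic (so no uniformizer of L is fixed by τ), no such data exist. -/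

import Mathlib

/-- In a ramified even unitary group U_{2r}, r ≥ 3, suppose units d_{ij} of the
valuation ring A of L, u ∈ L with u·τ(u) = 1, and a non-τ-fixed uniformizer π
satisfy the constraints coming from the Coxeter braid relations.  Then
τ(d₁₁·π) = d₁₁·π, i.e. d₁₁·π is a τ-fixed uniformizer; consequently, if no
uniformizer of L of the form (unit)·π is τ-fixed, no such data exist. -/
theorem stmt_9 {A L : Type*} [CommRing A] [IsDomain A] [IsDiscreteValuationRing A]
    [Field L] [Algebra A L] [IsFractionRing A L]
    (τ : L ≃+* L) (hτ2 : ∀ x, τ (τ x) = x) (r : ℕ) (hr : 3 ≤ r)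
    (d11 d21 d31 d12 d22 d32 : Aˣ) (u : L) (hu : u * τ u = 1)
    (π : A) (hπ : Irreducible π) (hπτ : τ (algebraMap A L π) ≠ algebraMap A L π)
    (h1 : (τ (algebraMap A L ↑d21))⁻¹ = u * algebraMap A L ↑d11)
    (h2 : algebraMap A L ↑d22 * algebraMap A L ↑d32 =
      u * (algebraMap A L π)⁻¹ * τ (algebraMap A L π))
    (h3a : (d31 : A) = (d12 : A))
    (h3b : algebraMap A L ↑d11 * algebraMap A L ↑d21 * (algebraMap A L ↑d31)⁻¹ =
      (algebraMap A L ↑d12)⁻¹ * algebraMap A L ↑d22 * algebraMap A L ↑d32) :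
    τ (algebraMap A L ↑d11 * algebraMap A L π) = algebraMap A L ↑d11 * algebraMap A L π ∧
    ((∀ y : Aˣ, τ (algebraMap A L ↑y * algebraMap A L π) ≠
        algebraMap A L ↑y * algebraMap A L π) → False) := by
  have hinj : Function.Injective (algebraMap A L) := IsFractionRing.injective A L
  have hne : ∀ a : A, a ≠ 0 → algebraMap A L a ≠ 0 := by
    intro a ha h
    exact ha (hinj (by simpa using h))
  have h11 : algebraMap A L (d11 : A) ≠ 0 := hne _ d11.ne_zero
  have h21 : algebraMap A L (d21 : A) ≠ 0 := hne _ d21.ne_zero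
  have h31 : algebraMap A L (d31 : A) ≠ 0 := hne _ d31.ne_zero
  have h12 : algebraMap A L (d12 : A) ≠ 0 := hne _ d12.ne_zero
  have hπ0 : algebraMap A L π ≠ 0 := hne _ hπ.ne_zero
  have hτπ0 : τ (algebraMap A L π) ≠ 0 := by
    simpa using (map_ne_zero_iff τ τ.injective).mpr hπ0
  have hτ21 : τ (algebraMap A L (d21 : A)) ≠ 0 := by
    simpa using (map_ne_zero_iff τ τ.injective).mpr h21
  have hu0 : u ≠ 0 := by
    intro h; rw [h] at hu; simp at hu
  -- from h3a, h3b: d22*d32 = d11*d21 in L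
  have hA : algebraMap A L (d11 : A) * algebraMap A L (d21 : A)
      = algebraMap A L (d22 : A) * algebraMap A L (d32 : A) := by
    have h3a' : algebraMap A L (d31 : A) = algebraMap A L (d12 : A) := by rw [h3a]
    rw [h3a'] at h3b
    field_simp at h3b
    linear_combination h3b
  -- hence d11*d21 = u * π⁻¹ * τ π
  have hB : algebraMap A L (d11 : A) * algebraMap A L (d21 : A)
      = u * (algebraMap A L π)⁻¹ * τ (algebraMap A L π) := hA.trans h2
  -- u⁻¹ = τ d21 * d11
  have hu1 : τ (algebraMap A L (d21 : A)) * (u * algebraMap A L (d11 : A)) = 1 := by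
    rw [← h1]; field_simp
  -- apply τ to hB
  have hC : τ (algebraMap A L (d11 : A)) * τ (algebraMap A L (d21 : A))
      = τ u * (τ (algebraMap A L π))⁻¹ * algebraMap A L π := by
    have := congrArg τ hB
    rw [map_mul] at this
    rw [this, map_mul, map_mul, map_inv₀, hτ2]
  -- τ u = τ d21 * d11
  have hτu : τ u = τ (algebraMap A L (d21 : A)) * algebraMap A L (d11 : A) := by
    refine mul_right_cancel₀ hu0 ?_
    linear_combination hu - hu1
  have e : τ (algebraMap A L (d11 : A)) * τ (algebraMap A L (d21 : A)) * τ (algebraMap A L π)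
      = τ (algebraMap A L (d21 : A)) * algebraMap A L (d11 : A) * algebraMap A L π := by
    rw [hτu] at hC
    field_simp at hC
    linear_combination τ (algebraMap A L (d21 : A)) * hC
  have key : τ (algebraMap A L (d11 : A)) * τ (algebraMap A L π)
      = algebraMap A L (d11 : A) * algebraMap A L π := by
    refine mul_left_cancel₀ hτ21 ?_
    linear_combination e
  refine ⟨by rw [map_mul]; exact key, fun h => h d11 (by rw [map_mul]; exact key)⟩
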